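/- Suppose in addition that τ_1 > 0, τ_2 > 0, d_1 < d_3 < −max(τ_1,τ_2) < 0 and d_4 < d_2 < −max(τ_1,τ_2) < 0. Then Q(h) = 1/( (2πi)^{4n_2} · n_1! · (Δn)! ) times the iterated integral in which z_1,…,z_{n_1} run over Γ_{d_1}, z_{n_1+1},…,z_{n_2} over Γ_{d_2}, w_1,…,w_{n_1} over Γ_{d_3}, w_{n_1+1},…,w_{n_2} over Γ_{d_4}, ζ_1,…,ζ_{n_2} over γ_{τ_1}, and ω_1,…,ω_{n_2} over γ_{τ_2}, of the integrand det( ζ_j^{−i} )_{1≤i,j≤n_2} · det( ω_j^{−(n_2+1−i)} )_{1≤i,j≤n_2} · ∏_{j=1}^{n_1} [ z_j^{n_1} w_j^{Δn} e^{(1/2)μ_1 z_j^2 − ξ_1 z_j + (1/2)Δμ w_j^2 − Δξ w_j} / ( e^{(1/2)μ_1 ζ_j^2 − ξ_1 ζ_j + (1/2)Δμ ω_j^2 − Δξ ω_j} (ζ_j − z_j)(ω_j − w_j) ) ] · ( 1/(z_j − w_j) − h ) · ∏_{j=n_1+1}^{n_2} [ z_j^{n_1+1} w_j^{Δn−1}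 e^{(1/2)μ_1 z_j^2 − ξ_1 z_j + (1/2)Δμ w_j^2 − Δξ w_j} / ( e^{(1/2)μ_1 ζ_j^2 − ξ_1 ζ_j + (1/2)Δμ ω_j^2 − Δξ ω_j} (w_j − z_j)(ζ_j − z_j)(ω_j − w_j) ) ]. -/

import Mathlib

set_option maxHeartbeats 1000000


open scoped BigOperators Real

open MeasureTheory

/-- The iterated contour integral `∮_{γ_{ρ_1}} ⋯ ∮_{γ_{ρ_n}} f(z_1,…,z_n) dz_n ⋯ dz_1`
over positively oriented circles `γ_{ρ_j}` of radius `ρ j` centred at the origin,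
written as an integral over the angles `θ ∈ [0,2π]^n`. -/
noncomputable def circlesIntegral {n : ℕ} (ρ : Fin n → ℝ) (f : (Fin n → ℂ) → ℂ) : ℂ :=
  ∫ θ in Set.univ.pi fun _ : Fin n => Set.Ioc (0 : ℝ) (2 * π),
    (∏ j : Fin n, Complex.I * (ρ j : ℂ) * Complex.exp (Complex.I * (θ j : ℂ))) *
      f fun j => (ρ j : ℂ) * Complex.exp (Complex.I * (θ j : ℂ))

/-- The iterated contour integral `∫_{Γ_{d_1}} ⋯ ∫_{Γ_{d_n}} f(z_1,…,z_n) dz_n ⋯ dz_1`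
over upward-oriented vertical lines `Γ_{d_j} : t ↦ d_j + it`. -/
noncomputable def linesIntegral {n : ℕ} (d : Fin n → ℝ) (f : (Fin n → ℂ) → ℂ) : ℂ :=
  ∫ t : Fin n → ℝ, Complex.I ^ n * f fun j => (d j : ℂ) + (t j : ℂ) * Complex.I

/-- The Gaussian factor `exp(μ₁z²/2 - ξ₁z + Δμw²/2 - Δξw)`. -/
noncomputable def Eexp (μ₁ ξ₁ Δμ Δξ : ℝ) (z w : ℂ) : ℂ :=
  Complex.exp ((μ₁ : ℂ) / 2 * z ^ 2 - (ξ₁ : ℂ) * z + (Δμ : ℂ) / 2 * w ^ 2 - (Δξ : ℂ) * w)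


open Metric Real Equiv Equiv.Perm

lemma circlesIntegral_const_mul {n : ℕ} (ρ : Fin n → ℝ) (c : ℂ) (f : (Fin n → ℂ) → ℂ) :
    circlesIntegral ρ (fun ζ => c * f ζ) = c * circlesIntegral ρ f := by
  unfold circlesIntegral
  rw [← integral_const_mul]
  congr 1 with θ
  ring

lemma integral_Ioc_eq_circle (τ : ℝ) (f : ℂ → ℂ) :
    (∫ θ in Set.Ioc (0:ℝ) (2*π),
        (Complex.I * (τ:ℂ) * Complex.exp (Complex.I * (θ:ℂ))) * f ((τ:ℂ) * Complex.exp (Complex.I * (θ:ℂ))))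
      = ∮ z in C(0, τ), f z := by
  rw [circleIntegral]
  rw [intervalIntegral.integral_of_le (by positivity : (0:ℝ) ≤ 2*π)]
  apply setIntegral_congr_fun (by measurability)
  intro θ _
  simp only [deriv_circleMap, circleMap, smul_eq_mul, Complex.ofReal_zero, zero_add]
  ring_nf

lemma circlesIntegral_det {n : ℕ} {τ : ℝ} (hτ : 0 < τ) (E : Fin n → ℤ) (F : Fin n → ℂ → ℂ)
    (hF : ∀ j, ContinuousOn (F j) (Metric.sphere (0:ℂ) τ)) :
    circlesIntegral (fun _ : Fin n => τ) (fun ζ =>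
      (Matrix.of fun i j : Fin n => ζ j ^ (E i)).det * ∏ j, F j (ζ j)) =
    (Matrix.of fun i j : Fin n => ∮ z in C(0, τ), z ^ (E i) * F j z).det := by
  classical
  -- the one-variable integrand for row `i`, column `j`
  set q : Fin n → Fin n → ℝ → ℂ := fun i j θ =>
    (Complex.I * (τ:ℂ) * Complex.exp (Complex.I * (θ:ℂ))) *
      (((τ:ℂ) * Complex.exp (Complex.I * (θ:ℂ))) ^ (E i) *
        F j ((τ:ℂ) * Complex.exp (Complex.I * (θ:ℂ)))) with hq
  have hm : ∀ θ : ℝ, ((τ:ℂ) * Complex.exp (Complex.I * (θ:ℂ))) ∈ Metric.sphere (0:ℂ) τ := by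
    intro θ
    have : ‖(τ:ℂ) * Complex.exp (Complex.I * (θ:ℂ))‖ = τ := by
      rw [norm_mul, Complex.norm_exp]
      simp [abs_of_pos hτ]
    simpa [Metric.mem_sphere, Complex.dist_eq] using this
  have hqc : ∀ i j, Continuous (q i j) := by
    intro i j
    have hbase : Continuous fun θ : ℝ => (τ:ℂ) * Complex.exp (Complex.I * (θ:ℂ)) :=
      continuous_const.mul (Complex.continuous_exp.comp (continuous_const.mul Complex.continuous_ofReal))
    have hne : ∀ θ : ℝ, (τ:ℂ) * Complex.exp (Complex.I * (θ:ℂ)) ≠ 0 := fun θ =>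
      mul_ne_zero (Complex.ofReal_ne_zero.2 hτ.ne') (Complex.exp_ne_zero _)
    exact ((continuous_const.mul (Complex.continuous_exp.comp
        (continuous_const.mul Complex.continuous_ofReal)))).mul
      ((hbase.zpow₀ (E i) (fun θ => Or.inl (hne θ))).mul
        ((hF j).comp_continuous hbase hm))
  have hBmeas : MeasurableSet (Set.univ.pi fun _ : Fin n => Set.Ioc (0:ℝ) (2*π)) :=
    MeasurableSet.univ_pi fun _ => measurableSet_Ioc
  have hint : ∀ σ : Equiv.Perm (Fin n),
      IntegrableOn (fun θ : Fin n → ℝ => ∏ j, q (σ j) j (θ j))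
        (Set.univ.pi fun _ : Fin n => Set.Ioc (0:ℝ) (2*π)) := by
    intro σ
    have hcont : Continuous fun θ : Fin n → ℝ => ∏ j, q (σ j) j (θ j) :=
      continuous_finset_prod _ fun j _ => (hqc (σ j) j).comp (continuous_apply j)
    have hcomp : IsCompact (Set.univ.pi fun _ : Fin n => Set.Icc (0:ℝ) (2*π)) :=
      isCompact_univ_pi fun _ => isCompact_Icc
    exact (hcont.continuousOn.integrableOn_compact hcomp).mono_set
      (Set.pi_mono fun i _ => Set.Ioc_subset_Icc_self)
  have hpoint : ∀ θ : Fin n → ℝ,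
      ((∏ j : Fin n, Complex.I * (τ:ℂ) * Complex.exp (Complex.I * (θ j:ℂ))) *
        ((Matrix.of fun i j : Fin n => ((τ:ℂ) * Complex.exp (Complex.I * (θ j : ℂ))) ^ (E i)).det *
          ∏ j, F j ((τ:ℂ) * Complex.exp (Complex.I * (θ j : ℂ)))))
      = ∑ σ : Equiv.Perm (Fin n), ((Equiv.Perm.sign σ : ℤ) : ℂ) * ∏ j : Fin n, q (σ j) j (θ j) := by
    intro θ
    rw [Matrix.det_apply']
    rw [Finset.sum_mul, Finset.mul_sum]
    refine Finset.sum_congr rfl fun σ _ => ?_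
    have hsplit : ∏ j : Fin n, q (σ j) j (θ j)
        = (∏ j : Fin n, Complex.I * (τ:ℂ) * Complex.exp (Complex.I * (θ j:ℂ))) *
          ((∏ j : Fin n, ((τ:ℂ) * Complex.exp (Complex.I * (θ j:ℂ))) ^ (E (σ j))) *
           (∏ j, F j ((τ:ℂ) * Complex.exp (Complex.I * (θ j:ℂ))))) := by
      rw [← Finset.prod_mul_distrib, ← Finset.prod_mul_distrib]
    rw [hsplit]
    simp only [Matrix.of_apply, Matrix.cons_val', Matrix.cons_val_fin_one]
    ring
  unfold circlesIntegral
  rw [setIntegral_congr_fun hBmeas (fun θ _ => hpoint θ)]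
  rw [integral_finset_sum _ (fun σ _ => ((hint σ).const_mul _))]
  rw [Matrix.det_apply']
  refine Finset.sum_congr rfl fun σ _ => ?_
  rw [integral_const_mul]
  congr 1
  rw [← integral_indicator hBmeas]
  have hind : ((Set.univ.pi fun _ : Fin n => Set.Ioc (0:ℝ) (2*π)).indicator
        fun θ : Fin n → ℝ => ∏ j, q (σ j) j (θ j))
      = fun θ : Fin n → ℝ => ∏ j, (Set.Ioc (0:ℝ) (2*π)).indicator (q (σ j) j) (θ j) := by
    funext θ
    by_cases hθ : θ ∈ Set.univ.pi fun _ : Fin n => Set.Ioc (0:ℝ) (2*π)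
    · rw [Set.indicator_of_mem hθ]
      exact Finset.prod_congr rfl fun j _ =>
        (Set.indicator_of_mem (hθ j (Set.mem_univ j)) _).symm
    · rw [Set.indicator_of_notMem hθ]
      rw [Set.mem_univ_pi] at hθ
      push_neg at hθ
      obtain ⟨j, hj⟩ := hθ
      exact (Finset.prod_eq_zero (Finset.mem_univ j)
        (Set.indicator_of_notMem hj _)).symm
  rw [hind]
  rw [MeasureTheory.integral_fintype_prod_volume_eq_prod (ι := Fin n)
    (fun j => (Set.Ioc (0:ℝ) (2*π)).indicator (q (σ j) j))]
  refine Finset.prod_congr rfl fun j _ => ?_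
  simp only [Matrix.of_apply]
  rw [integral_indicator measurableSet_Ioc,
    ← integral_Ioc_eq_circle τ (fun z => z ^ (E (σ j)) * F j z)]

lemma revPerm_succ_eq (n : ℕ) :
    (Fin.revPerm : Perm (Fin (n+1))) =
      finRotate (n+1) * (finSuccEquivLast.symm.permCongr (Fin.revPerm : Perm (Fin n)).optionCongr) := by
  ext x
  refine Fin.lastCases ?_ (fun i => ?_) x
  · simp [Equiv.permCongr_apply, finSuccEquivLast_last]
  · simp [Equiv.permCongr_apply, finSuccEquivLast_castSucc, Fin.rev_castSucc,
      finRotate_succ_apply, Fin.coeSucc_eq_succ]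

lemma sign_revPerm (n : ℕ) :
    Equiv.Perm.sign (Fin.revPerm : Perm (Fin n)) = (-1 : ℤˣ) ^ (n * (n-1) / 2) := by
  induction n with
  | zero =>
      have h : (Fin.revPerm : Perm (Fin 0)) = 1 := by ext x; exact x.elim0
      simp [h]
  | succ n ih =>
      rw [revPerm_succ_eq, map_mul, sign_finRotate, Equiv.Perm.sign_permCongr,
        Equiv.optionCongr_sign, ih, ← pow_add]
      congr 1
      have h1 : n * (n - 1) / 2 = n.choose 2 := (Nat.choose_two_right n).symm
      have h2 : (n+1) * (n + 1 - 1) / 2 = (n+1).choose 2 := (Nat.choose_two_right (n+1)).symm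
      rw [h1, h2, Nat.choose_succ_succ' n 1, Nat.choose_one_right]
      rfl
open MeasureTheory Metric Real

lemma zpow_negnat (z : ℂ) (m : ℕ) : z ^ (-(m:ℤ)-1) = (z ^ (m+1))⁻¹ := by
  rw [show (-(m:ℤ)-1) = -((m+1 : ℕ):ℤ) by push_cast; ring, zpow_neg, zpow_natCast]

lemma zpow_negnat' (z : ℂ) (m : ℕ) : z ^ (-(m:ℤ)) = (z ^ m)⁻¹ := by
  rw [zpow_neg, zpow_natCast]

lemma sphere_ne_zero {τ : ℝ} (hτ : 0 < τ) {z : ℂ} (hz : z ∈ sphere (0:ℂ) τ) : z ≠ 0 := by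
  intro h
  rw [mem_sphere, Complex.dist_eq, h] at hz
  simp only [sub_zero, norm_zero] at hz
  exact hτ.ne hz

lemma sphere_sub_ne {τ : ℝ} {x : ℂ} (hx : τ < ‖x‖) {z : ℂ}
    (hz : z ∈ sphere (0:ℂ) τ) : z - x ≠ 0 := by
  intro h
  rw [sub_eq_zero] at h
  rw [mem_sphere, Complex.dist_eq, sub_zero, h] at hz
  exact absurd hz hx.ne'

lemma ball_sub_ne {τ : ℝ} {x : ℂ} (hx : τ < ‖x‖) {z : ℂ}
    (hz : z ∈ closedBall (0:ℂ) τ) : z - x ≠ 0 := by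
  intro h
  rw [sub_eq_zero] at h
  rw [mem_closedBall, Complex.dist_eq, sub_zero, h] at hz
  exact absurd hx (not_lt.2 hz)

lemma contOn_aux {τ : ℝ} (hτ : 0 < τ) (g : ℂ → ℂ) (hg : Continuous g) {x : ℂ}
    (hx : τ < ‖x‖) (m : ℤ) :
    ContinuousOn (fun z : ℂ => z ^ m * (g z * (z - x)⁻¹)) (sphere (0:ℂ) τ) := by
  refine ContinuousOn.mul ?_ (ContinuousOn.mul hg.continuousOn ?_)
  · exact (continuousOn_id.zpow₀ m fun z hz => Or.inl (sphere_ne_zero hτ hz))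
  · exact ((continuousOn_id.sub continuousOn_const).inv₀ fun z hz => sphere_sub_ne hx hz)

lemma contOn_aux' {τ : ℝ} (hτ : 0 < τ) (g : ℂ → ℂ) (hg : Continuous g) (m : ℤ) :
    ContinuousOn (fun z : ℂ => z ^ m * g z) (sphere (0:ℂ) τ) :=
  ContinuousOn.mul
    (continuousOn_id.zpow₀ m fun z hz => Or.inl (sphere_ne_zero hτ hz)) hg.continuousOn

lemma goursat_zero {τ : ℝ} (hτ : 0 < τ) (g : ℂ → ℂ) (hg : Differentiable ℂ g)
    {x : ℂ} (hx : τ < ‖x‖) :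
    (∮ z in C(0, τ), g z * (z - x)⁻¹) = 0 := by
  apply Complex.circleIntegral_eq_zero_of_differentiable_on_off_countable hτ.le Set.countable_empty
  · exact ContinuousOn.mul hg.continuous.continuousOn
      ((continuousOn_id.sub continuousOn_const).inv₀ fun z hz => ball_sub_ne hx hz)
  · intro z hz
    exact (hg z).mul (((differentiableAt_id.sub_const x)).inv
      (ball_sub_ne hx (ball_subset_closedBall hz.1)))

lemma circle_step {τ : ℝ} (hτ : 0 < τ) (g : ℂ → ℂ) (hg : Differentiable ℂ g)
    {x : ℂ} (hx : τ < ‖x‖) (k : ℕ) :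
    (∮ z in C(0,τ), z ^ (-(k:ℤ)-1) * (g z * (z - x)⁻¹))
      = x⁻¹ * ((∮ z in C(0,τ), z ^ (-(k:ℤ)) * (g z * (z - x)⁻¹))
          - (∮ z in C(0,τ), z ^ (-(k:ℤ)-1) * g z)) := by
  have hx0 : x ≠ 0 := by
    intro h; rw [h, norm_zero] at hx; linarith
  have h1 : CircleIntegrable (fun z : ℂ => z ^ (-(k:ℤ)) * (g z * (z - x)⁻¹)) 0 τ :=
    (contOn_aux hτ g hg.continuous hx _).circleIntegrable hτ.le
  have h2 : CircleIntegrable (fun z : ℂ => z ^ (-(k:ℤ)-1) * g z) 0 τ :=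
    (contOn_aux' hτ g hg.continuous _).circleIntegrable hτ.le
  rw [← circleIntegral.integral_sub h1 h2, ← circleIntegral.integral_const_mul]
  refine circleIntegral.integral_congr hτ.le fun z hz => ?_
  have hz0 := sphere_ne_zero hτ hz
  have hzx := sphere_sub_ne hx hz
  rw [zpow_negnat, zpow_negnat']
  rw [eq_inv_mul_iff_mul_eq₀ hx0]
  have h1 : (z:ℂ)^k ≠ 0 := pow_ne_zero _ hz0
  have h2 : (z:ℂ)^(k+1) ≠ 0 := pow_ne_zero _ hz0
  field_simp
  ring

lemma circle_entry {τ : ℝ} (hτ : 0 < τ) (g : ℂ → ℂ) (hg : Differentiable ℂ g)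
    {x : ℂ} (hx : τ < ‖x‖) (k : ℕ) :
    (∮ z in C(0,τ), z ^ (-(k:ℤ)-1) * (g z * (z - x)⁻¹))
      = -∑ m ∈ Finset.range (k+1),
          (∮ z in C(0,τ), z ^ (-(m:ℤ)-1) * g z) * x ^ ((m:ℤ) - (k:ℤ) - 1) := by
  have hx0 : x ≠ 0 := by
    intro h; rw [h, norm_zero] at hx; linarith
  induction k with
  | zero =>
      rw [circle_step hτ g hg hx 0]
      have h0 : (∮ z in C(0,τ), z ^ (-((0:ℕ):ℤ)) * (g z * (z - x)⁻¹)) = 0 := by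
        have : (∮ z in C(0,τ), z ^ (-((0:ℕ):ℤ)) * (g z * (z - x)⁻¹))
            = ∮ z in C(0,τ), g z * (z - x)⁻¹ := by
          refine circleIntegral.integral_congr hτ.le fun z _ => ?_
          norm_num
        rw [this]
        exact goursat_zero hτ g hg hx
      rw [h0, Finset.sum_range_one]
      norm_num [zpow_neg_one]
      ring
  | succ k ih =>
      rw [circle_step hτ g hg hx (k+1)]
      have hcast : (∮ z in C(0,τ), z ^ (-((k+1:ℕ):ℤ)) * (g z * (z - x)⁻¹))
          = ∮ z in C(0,τ), z ^ (-(k:ℤ)-1) * (g z * (z - x)⁻¹) := by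
        refine circleIntegral.integral_congr hτ.le fun z _ => ?_
        congr 1
        push_cast
        ring_nf
      rw [hcast, ih]
      have key : ∀ (c : ℂ) (m : ℕ), x⁻¹ * (c * x ^ ((m:ℤ)-(k:ℤ)-1))
          = c * x ^ ((m:ℤ)-((k+1:ℕ):ℤ)-1) := by
        intro c m
        rw [show ((m:ℤ)-((k+1:ℕ):ℤ)-1) = (-1) + ((m:ℤ)-(k:ℤ)-1) by push_cast; ring,
          zpow_add₀ hx0, zpow_neg_one]
        ring
      conv_rhs => rw [Finset.sum_range_succ]
      rw [mul_sub, mul_neg, Finset.mul_sum]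
      rw [Finset.sum_congr rfl (fun m _ => key _ m)]
      rw [show ((k+1:ℕ):ℤ) - ((k+1:ℕ):ℤ) - 1 = (-1:ℤ) by push_cast; ring, zpow_neg_one]
      ring
open Metric Real

lemma rev_val (n : ℕ) (i : Fin n) : (Fin.rev i : ℕ) = n - 1 - (i:ℕ) := by
  rw [Fin.val_rev]; omega

noncomputable def CC (τ : ℝ) (g : ℂ → ℂ) : ℕ → ℂ := fun m => ∮ z in C(0,τ), z ^ (-(m:ℤ)-1) * g z

lemma sum_tri {n : ℕ} (x : ℂ) (τ : ℝ) (g : ℂ → ℂ) (i : Fin n) :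
    (∑ m : Fin n, (if (m:ℕ) ≤ (i:ℕ) then -(CC τ g ((i:ℕ)-(m:ℕ))) else 0) * x ^ (-((m:ℕ):ℤ)-1))
      = -∑ m ∈ Finset.range ((i:ℕ)+1), CC τ g m * x ^ ((m:ℤ)-((i:ℕ):ℤ)-1) := by
  rw [Fin.sum_univ_eq_sum_range
    (fun m => (if m ≤ (i:ℕ) then -(CC τ g ((i:ℕ)-m)) else 0) * x ^ (-(m:ℤ)-1)) n]
  rw [← Finset.sum_subset (Finset.range_subset_range.2 i.isLt)
      (fun m _ hm => by
        rw [Finset.mem_range, not_lt] at hm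
        rw [if_neg (by omega), zero_mul])]
  rw [← Finset.sum_neg_distrib]
  rw [← Finset.sum_range_reflect (fun m => -(CC τ g m * x ^ ((m:ℤ)-((i:ℕ):ℤ)-1))) ((i:ℕ)+1)]
  refine Finset.sum_congr rfl fun m hm => ?_
  rw [Finset.mem_range] at hm
  have hm' : m ≤ (i:ℕ) := by omega
  rw [if_pos hm']
  have h1 : ((i:ℕ) + 1 - 1 - m) = (i:ℕ) - m := by omega
  rw [h1]
  have h2 : (((i:ℕ) - m : ℕ) : ℤ) - ((i:ℕ):ℤ) - 1 = -(m:ℤ)-1 := by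
    push_cast [Nat.cast_sub hm']; ring
  rw [h2]
  ring

lemma det_circle_entries {n : ℕ} {τ : ℝ} (hτ : 0 < τ) (g : ℂ → ℂ) (hg : Differentiable ℂ g)
    (x : Fin n → ℂ) (hx : ∀ j, τ < ‖x j‖) :
    (Matrix.of fun i j : Fin n => ∮ z in C(0,τ), z ^ (-((i:ℕ):ℤ)-1) * (g z * (z - x j)⁻¹)).det
      = (-(∮ z in C(0,τ), z ^ (-1:ℤ) * g z)) ^ n *
        (Matrix.of fun i j : Fin n => (x j) ^ (-((i:ℕ):ℤ)-1)).det := by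
  have hfact : (Matrix.of fun i j : Fin n =>
        ∮ z in C(0,τ), z ^ (-((i:ℕ):ℤ)-1) * (g z * (z - x j)⁻¹))
      = (Matrix.of fun i m : Fin n => if (m:ℕ) ≤ (i:ℕ) then -(CC τ g ((i:ℕ)-(m:ℕ))) else 0) *
        (Matrix.of fun m j : Fin n => (x j) ^ (-((m:ℕ):ℤ)-1)) := by
    ext i j
    rw [Matrix.mul_apply]
    simp only [Matrix.of_apply]
    rw [circle_entry hτ g hg (hx j) (i:ℕ)]
    exact (sum_tri (x j) τ g i).symm
  rw [hfact, Matrix.det_mul]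
  congr 1
  rw [Matrix.det_of_lowerTriangular _
    (by intro i j hij
        simp only [Matrix.of_apply]
        rw [if_neg]
        have : (i:ℕ) < (j:ℕ) := hij
        omega)]
  have hdiag : ∀ i : Fin n, (Matrix.of fun i m : Fin n =>
      if (m:ℕ) ≤ (i:ℕ) then -(CC τ g ((i:ℕ)-(m:ℕ))) else 0) i i
      = -(∮ z in C(0,τ), z ^ (-1:ℤ) * g z) := by
    intro i
    simp only [Matrix.of_apply, le_refl, if_pos, Nat.sub_self]
    unfold CC
    norm_num
  rw [Finset.prod_congr rfl fun i _ => hdiag i, Finset.prod_const, Finset.card_univ,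
    Fintype.card_fin]

lemma det_circle_entries_rev {n : ℕ} {τ : ℝ} (hτ : 0 < τ) (g : ℂ → ℂ) (hg : Differentiable ℂ g)
    (x : Fin n → ℂ) (hx : ∀ j, τ < ‖x j‖) :
    (Matrix.of fun i j : Fin n =>
        ∮ z in C(0,τ), z ^ (-((n:ℤ) - ((i:ℕ):ℤ))) * (g z * (z - x j)⁻¹)).det
      = (-(∮ z in C(0,τ), z ^ (-1:ℤ) * g z)) ^ n *
        (Matrix.of fun i j : Fin n => (x j) ^ (-((n:ℤ) - ((i:ℕ):ℤ)))).det := by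
  have he : ∀ i : Fin n, -((n:ℤ) - ((i:ℕ):ℤ)) = -(((Fin.rev i : ℕ):ℤ)) - 1 := by
    intro i
    have hlt := i.isLt
    rw [rev_val]
    omega
  have h1 : (Matrix.of fun i j : Fin n =>
        ∮ z in C(0,τ), z ^ (-((n:ℤ) - ((i:ℕ):ℤ))) * (g z * (z - x j)⁻¹))
      = (Matrix.of fun i j : Fin n =>
          ∮ z in C(0,τ), z ^ (-((i:ℕ):ℤ)-1) * (g z * (z - x j)⁻¹)).submatrix Fin.revPerm id := by
    ext i j
    simp only [Matrix.submatrix_apply, Matrix.of_apply, id_eq, Fin.revPerm_apply]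
    rw [he i]
  have h2 : (Matrix.of fun i j : Fin n => (x j) ^ (-((n:ℤ) - ((i:ℕ):ℤ))))
      = (Matrix.of fun i j : Fin n => (x j) ^ (-((i:ℕ):ℤ)-1)).submatrix Fin.revPerm id := by
    ext i j
    simp only [Matrix.submatrix_apply, Matrix.of_apply, id_eq, Fin.revPerm_apply]
    rw [he i]
  rw [h1, h2, Matrix.det_permute, Matrix.det_permute, det_circle_entries hτ g hg x hx]
  ring

lemma det_zpow_shift {n : ℕ} (x : Fin n → ℂ) (hx : ∀ j, x j ≠ 0) :
    (Matrix.of fun i j : Fin n => (x j) ^ (-((n:ℤ) - ((i:ℕ):ℤ)))).det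
      = (∏ j, ((x j) ^ n)⁻¹) * (Matrix.of fun i j : Fin n => (x j) ^ ((i:ℕ))).det := by
  have h1 : (Matrix.of fun i j : Fin n => (x j) ^ (-((n:ℤ) - ((i:ℕ):ℤ))))
      = Matrix.of fun i j : Fin n =>
          ((x j)^n)⁻¹ * ((Matrix.of fun i j : Fin n => (x j) ^ ((i:ℕ))) i j) := by
    ext i j
    simp only [Matrix.of_apply]
    rw [show -((n:ℤ) - ((i:ℕ):ℤ)) = (-(n:ℤ)) + ((i:ℕ):ℤ) by ring,
      zpow_add₀ (hx j), zpow_neg, zpow_natCast, zpow_natCast]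
  rw [h1, Matrix.det_mul_row]

lemma det_zpow_neg {n : ℕ} (x : Fin n → ℂ) (hx : ∀ j, x j ≠ 0) :
    (Matrix.of fun i j : Fin n => (x j) ^ (-((i:ℕ):ℤ)-1)).det
      = (-1:ℂ) ^ (n*(n-1)/2) * (∏ j, ((x j)^n)⁻¹) *
        (Matrix.of fun i j : Fin n => (x j) ^ ((i:ℕ))).det := by
  have he : ∀ i : Fin n, (-((i:ℕ):ℤ)-1) = -((n:ℤ) - (((Fin.rev i):ℕ):ℤ)) := by
    intro i
    have hlt := i.isLt
    rw [rev_val]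
    omega
  have h1 : (Matrix.of fun i j : Fin n => (x j) ^ (-((i:ℕ):ℤ)-1))
      = (Matrix.of fun i j : Fin n => (x j) ^ (-((n:ℤ) - ((i:ℕ):ℤ)))).submatrix Fin.revPerm id := by
    ext i j
    simp only [Matrix.submatrix_apply, Matrix.of_apply, id_eq, Fin.revPerm_apply]
    rw [he i]
  have hsign : ((Equiv.Perm.sign (Fin.revPerm : Equiv.Perm (Fin n)) : ℤ) : ℂ)
      = (-1:ℂ) ^ (n*(n-1)/2) := by
    rw [sign_revPerm]
    push_cast
    norm_num
  rw [h1, Matrix.det_permute, det_zpow_shift x hx, hsign]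
  ring

lemma cauchy_inv {τ : ℝ} (hτ : 0 < τ) (g : ℂ → ℂ) (hg : Differentiable ℂ g) :
    (∮ z in C(0,τ), z ^ (-1:ℤ) * g z) = 2 * (π:ℂ) * Complex.I * g 0 := by
  have hd : DiffContOnCl ℂ g (Metric.ball (0:ℂ) τ) :=
    ⟨hg.differentiableOn, hg.continuous.continuousOn⟩
  have := hd.circleIntegral_sub_inv_smul (Metric.mem_ball_self hτ)
  simp only [sub_zero, smul_eq_mul] at this
  rw [← this]
  refine circleIntegral.integral_congr hτ.le fun z _ => ?_
  rw [zpow_neg_one]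


lemma contOn_F {τ : ℝ} (g : ℂ → ℂ) (hg : Continuous g) {x : ℂ} (hx : τ < ‖x‖) :
    ContinuousOn (fun t : ℂ => g t * (t - x)⁻¹) (Metric.sphere (0:ℂ) τ) :=
  hg.continuousOn.mul ((continuousOn_id.sub continuousOn_const).inv₀ fun z hz => sphere_sub_ne hx hz)

lemma core_identity (n₁ n₂ : ℕ) (hn₁₂ : n₁ < n₂) (μ₁ Δμ ξ₁ Δξ : ℝ) (h : ℂ)
    (τ₁ τ₂ : ℝ) (hτ₁ : 0 < τ₁) (hτ₂ : 0 < τ₂)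
    (z w : Fin n₂ → ℂ)
    (hz0 : ∀ j, z j ≠ 0) (hw0 : ∀ j, w j ≠ 0)
    (hzτ : ∀ j, τ₁ < ‖z j‖)
    (hwτ : ∀ j, τ₂ < ‖w j‖)
    (hzw : ∀ j, z j ≠ w j) :
    (-1 : ℂ) ^ (n₂ * (n₂ - 1) / 2) /
        ((2 * (π : ℂ) * Complex.I) ^ (2 * n₂) *
          (Nat.factorial n₁ : ℂ) * (Nat.factorial (n₂ - n₁) : ℂ)) *
      (Matrix.det (Matrix.of fun i j : Fin n₂ => z j ^ (i : ℕ)) *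
        Matrix.det (Matrix.of fun i j : Fin n₂ => w j ^ (i : ℕ)) *
        ∏ j : Fin n₂,
          (if (j:ℕ) < n₁ then
            Eexp μ₁ ξ₁ Δμ Δξ (z j) (w j) / (z j ^ (n₂ - n₁) * w j ^ n₁) * ((z j - w j)⁻¹ - h)
          else
            Eexp μ₁ ξ₁ Δμ Δξ (z j) (w j) /
              (z j ^ (n₂ - n₁ - 1) * w j ^ (n₁ + 1) * (w j - z j))))
    = 1 / ((2 * (π : ℂ) * Complex.I) ^ (4 * n₂) *
          (Nat.factorial n₁ : ℂ) * (Nat.factorial (n₂ - n₁) : ℂ)) *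
      circlesIntegral (fun _ : Fin n₂ => τ₁) (fun ζ =>
        circlesIntegral (fun _ : Fin n₂ => τ₂) (fun ω =>
          Matrix.det (Matrix.of fun i j : Fin n₂ => ζ j ^ (-(((i:ℕ):ℤ) + 1))) *
            Matrix.det (Matrix.of fun i j : Fin n₂ => ω j ^ (-((n₂:ℤ) - ((i:ℕ):ℤ)))) *
            ∏ j : Fin n₂,
              (if (j:ℕ) < n₁ then
                z j ^ n₁ * w j ^ (n₂ - n₁) * Eexp μ₁ ξ₁ Δμ Δξ (z j) (w j) /
                    (Eexp μ₁ ξ₁ Δμ Δξ (ζ j) (ω j) * (ζ j - z j) * (ω j - w j)) *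
                  ((z j - w j)⁻¹ - h)
              else
                z j ^ (n₁ + 1) * w j ^ (n₂ - n₁ - 1) * Eexp μ₁ ξ₁ Δμ Δξ (z j) (w j) /
                  (Eexp μ₁ ξ₁ Δμ Δξ (ζ j) (ω j) * (w j - z j) *
                    (ζ j - z j) * (ω j - w j))))) := by
  classical
  simp only [show ∀ a : ℤ, -(a+1) = -a-1 from fun a => by ring]
  set g₁ : ℂ → ℂ := fun t => Complex.exp (-((μ₁:ℂ)/2 * t^2 - (ξ₁:ℂ)*t)) with hg₁def
  set g₂ : ℂ → ℂ := fun t => Complex.exp (-((Δμ:ℂ)/2 * t^2 - (Δξ:ℂ)*t)) with hg₂def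
  have hg₁ : Differentiable ℂ g₁ :=
    (((differentiable_const _).mul (differentiable_pow 2)).sub
      ((differentiable_const _).mul differentiable_id)).neg.cexp
  have hg₂ : Differentiable ℂ g₂ :=
    (((differentiable_const _).mul (differentiable_pow 2)).sub
      ((differentiable_const _).mul differentiable_id)).neg.cexp
  have hg₁0 : g₁ 0 = 1 := by simp [hg₁def]
  have hg₂0 : g₂ 0 = 1 := by simp [hg₂def]
  have hE : ∀ a b : ℂ, Eexp μ₁ ξ₁ Δμ Δξ a b = (g₁ a)⁻¹ * (g₂ b)⁻¹ := by
    intro a b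
    simp only [Eexp, hg₁def, hg₂def]
    rw [← Complex.exp_neg, ← Complex.exp_neg, ← Complex.exp_add]
    congr 1
    ring
  set P : Fin n₂ → ℂ := fun j =>
    if (j:ℕ) < n₁ then
      z j ^ n₁ * w j ^ (n₂ - n₁) * Eexp μ₁ ξ₁ Δμ Δξ (z j) (w j) * ((z j - w j)⁻¹ - h)
    else
      z j ^ (n₁+1) * w j ^ (n₂-n₁-1) * Eexp μ₁ ξ₁ Δμ Δξ (z j) (w j) * (w j - z j)⁻¹
    with hP
  have hsplit : ∀ ζ ω : Fin n₂ → ℂ,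
      (∏ j : Fin n₂,
          (if (j:ℕ) < n₁ then
            z j ^ n₁ * w j ^ (n₂ - n₁) * Eexp μ₁ ξ₁ Δμ Δξ (z j) (w j) /
                (Eexp μ₁ ξ₁ Δμ Δξ (ζ j) (ω j) * (ζ j - z j) * (ω j - w j)) *
              ((z j - w j)⁻¹ - h)
          else
            z j ^ (n₁ + 1) * w j ^ (n₂ - n₁ - 1) * Eexp μ₁ ξ₁ Δμ Δξ (z j) (w j) /
              (Eexp μ₁ ξ₁ Δμ Δξ (ζ j) (ω j) * (w j - z j) * (ζ j - z j) * (ω j - w j))))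
        = (∏ j, P j) * ((∏ j, g₁ (ζ j) * (ζ j - z j)⁻¹) * (∏ j, g₂ (ω j) * (ω j - w j)⁻¹)) := by
    intro ζ ω
    rw [← Finset.prod_mul_distrib, ← Finset.prod_mul_distrib]
    refine Finset.prod_congr rfl fun j _ => ?_
    simp only [hP]
    by_cases hj : (j:ℕ) < n₁
    · simp only [if_pos hj]
      rw [hE (ζ j) (ω j)]
      simp only [div_eq_mul_inv, mul_inv, inv_inv]
      ring
    · simp only [if_neg hj]
      rw [hE (ζ j) (ω j)]
      simp only [div_eq_mul_inv, mul_inv, inv_inv]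
      ring
  have hω : ∀ ζ : Fin n₂ → ℂ,
      circlesIntegral (fun _ : Fin n₂ => τ₂) (fun ω =>
          Matrix.det (Matrix.of fun i j : Fin n₂ => ζ j ^ (-((i:ℕ):ℤ) - 1)) *
            Matrix.det (Matrix.of fun i j : Fin n₂ => ω j ^ (-((n₂:ℤ) - ((i:ℕ):ℤ)))) *
            ∏ j : Fin n₂,
              (if (j:ℕ) < n₁ then
                z j ^ n₁ * w j ^ (n₂ - n₁) * Eexp μ₁ ξ₁ Δμ Δξ (z j) (w j) /
                    (Eexp μ₁ ξ₁ Δμ Δξ (ζ j) (ω j) * (ζ j - z j) * (ω j - w j)) *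
                  ((z j - w j)⁻¹ - h)
              else
                z j ^ (n₁ + 1) * w j ^ (n₂ - n₁ - 1) * Eexp μ₁ ξ₁ Δμ Δξ (z j) (w j) /
                  (Eexp μ₁ ξ₁ Δμ Δξ (ζ j) (ω j) * (w j - z j) *
                    (ζ j - z j) * (ω j - w j))))
        = ((∏ j, P j) *
            ((-(2*(π:ℂ)*Complex.I))^n₂ *
              Matrix.det (Matrix.of fun i j : Fin n₂ => (w j) ^ (-((n₂:ℤ) - ((i:ℕ):ℤ)))))) *
          (Matrix.det (Matrix.of fun i j : Fin n₂ => ζ j ^ (-((i:ℕ):ℤ) - 1)) *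
            ∏ j, g₁ (ζ j) * (ζ j - z j)⁻¹) := by
    intro ζ
    have hfun : (fun ω : Fin n₂ → ℂ =>
        Matrix.det (Matrix.of fun i j : Fin n₂ => ζ j ^ (-((i:ℕ):ℤ) - 1)) *
          Matrix.det (Matrix.of fun i j : Fin n₂ => ω j ^ (-((n₂:ℤ) - ((i:ℕ):ℤ)))) *
          ∏ j : Fin n₂,
            (if (j:ℕ) < n₁ then
              z j ^ n₁ * w j ^ (n₂ - n₁) * Eexp μ₁ ξ₁ Δμ Δξ (z j) (w j) /
                  (Eexp μ₁ ξ₁ Δμ Δξ (ζ j) (ω j) * (ζ j - z j) * (ω j - w j)) *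
                ((z j - w j)⁻¹ - h)
            else
              z j ^ (n₁ + 1) * w j ^ (n₂ - n₁ - 1) * Eexp μ₁ ξ₁ Δμ Δξ (z j) (w j) /
                (Eexp μ₁ ξ₁ Δμ Δξ (ζ j) (ω j) * (w j - z j) *
                  (ζ j - z j) * (ω j - w j))))
        = fun ω : Fin n₂ → ℂ =>
            (Matrix.det (Matrix.of fun i j : Fin n₂ => ζ j ^ (-((i:ℕ):ℤ) - 1)) *
              ((∏ j, P j) * (∏ j, g₁ (ζ j) * (ζ j - z j)⁻¹))) *
            ((Matrix.of fun i j : Fin n₂ => ω j ^ (-((n₂:ℤ) - ((i:ℕ):ℤ)))).det *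
              ∏ j, g₂ (ω j) * (ω j - w j)⁻¹) := by
      funext ω
      rw [hsplit ζ ω]
      ring
    rw [hfun, circlesIntegral_const_mul]
    have hdet := circlesIntegral_det hτ₂ (fun i : Fin n₂ => -((n₂:ℤ) - ((i:ℕ):ℤ)))
        (fun j t => g₂ t * (t - w j)⁻¹)
        (fun j => contOn_F g₂ hg₂.continuous (hwτ j))
    rw [hdet]
    rw [det_circle_entries_rev hτ₂ g₂ hg₂ w hwτ]
    rw [cauchy_inv hτ₂ g₂ hg₂, hg₂0, mul_one]
    ring
  rw [show (fun ζ : Fin n₂ → ℂ =>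
      circlesIntegral (fun _ : Fin n₂ => τ₂) (fun ω =>
          Matrix.det (Matrix.of fun i j : Fin n₂ => ζ j ^ (-((i:ℕ):ℤ) - 1)) *
            Matrix.det (Matrix.of fun i j : Fin n₂ => ω j ^ (-((n₂:ℤ) - ((i:ℕ):ℤ)))) *
            ∏ j : Fin n₂,
              (if (j:ℕ) < n₁ then
                z j ^ n₁ * w j ^ (n₂ - n₁) * Eexp μ₁ ξ₁ Δμ Δξ (z j) (w j) /
                    (Eexp μ₁ ξ₁ Δμ Δξ (ζ j) (ω j) * (ζ j - z j) * (ω j - w j)) *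
                  ((z j - w j)⁻¹ - h)
              else
                z j ^ (n₁ + 1) * w j ^ (n₂ - n₁ - 1) * Eexp μ₁ ξ₁ Δμ Δξ (z j) (w j) /
                  (Eexp μ₁ ξ₁ Δμ Δξ (ζ j) (ω j) * (w j - z j) *
                    (ζ j - z j) * (ω j - w j)))))
      = fun ζ : Fin n₂ → ℂ =>
          (((∏ j, P j) *
            ((-(2*(π:ℂ)*Complex.I))^n₂ *
              Matrix.det (Matrix.of fun i j : Fin n₂ => (w j) ^ (-((n₂:ℤ) - ((i:ℕ):ℤ)))))))
          * (Matrix.det (Matrix.of fun i j : Fin n₂ => ζ j ^ (-((i:ℕ):ℤ) - 1)) *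
              ∏ j, g₁ (ζ j) * (ζ j - z j)⁻¹)
    from funext fun ζ => hω ζ]
  rw [circlesIntegral_const_mul]
  have hdet1 := circlesIntegral_det hτ₁ (fun i : Fin n₂ => -((i:ℕ):ℤ) - 1)
      (fun j t => g₁ t * (t - z j)⁻¹)
      (fun j => contOn_F g₁ hg₁.continuous (hzτ j))
  rw [hdet1]
  rw [det_circle_entries hτ₁ g₁ hg₁ z hzτ]
  rw [cauchy_inv hτ₁ g₁ hg₁, hg₁0, mul_one]
  rw [det_zpow_neg z hz0, det_zpow_shift w hw0]
  have hFP : (∏ j : Fin n₂,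
      (if (j:ℕ) < n₁ then
        Eexp μ₁ ξ₁ Δμ Δξ (z j) (w j) / (z j ^ (n₂ - n₁) * w j ^ n₁) * ((z j - w j)⁻¹ - h)
      else
        Eexp μ₁ ξ₁ Δμ Δξ (z j) (w j) /
          (z j ^ (n₂ - n₁ - 1) * w j ^ (n₁ + 1) * (w j - z j))))
      = (∏ j, ((z j ^ n₂)⁻¹)) * ((∏ j, ((w j ^ n₂)⁻¹)) * (∏ j, P j)) := by
    rw [← Finset.prod_mul_distrib, ← Finset.prod_mul_distrib]
    refine Finset.prod_congr rfl fun j _ => ?_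
    simp only [hP]
    by_cases hj : (j:ℕ) < n₁
    · simp only [if_pos hj]
      have hzz : z j ^ n₂ = z j ^ (n₂ - n₁) * z j ^ n₁ := by
        rw [← pow_add]; congr 1; omega
      have hww : w j ^ n₂ = w j ^ n₁ * w j ^ (n₂ - n₁) := by
        rw [← pow_add]; congr 1; omega
      rw [hzz, hww]
      have h1 : z j ^ (n₂ - n₁) ≠ 0 := pow_ne_zero _ (hz0 j)
      have h2 : z j ^ n₁ ≠ 0 := pow_ne_zero _ (hz0 j)
      have h3 : w j ^ n₁ ≠ 0 := pow_ne_zero _ (hw0 j)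
      have h4 : w j ^ (n₂ - n₁) ≠ 0 := pow_ne_zero _ (hw0 j)
      field_simp
    · simp only [if_neg hj]
      have hzz : z j ^ n₂ = z j ^ (n₂ - n₁ - 1) * z j ^ (n₁+1) := by
        rw [← pow_add]; congr 1; omega
      have hww : w j ^ n₂ = w j ^ (n₁+1) * w j ^ (n₂ - n₁ - 1) := by
        rw [← pow_add]; congr 1; omega
      have hwz : w j - z j ≠ 0 := sub_ne_zero.2 fun e => (hzw j) e.symm
      rw [hzz, hww]
      have h1 : z j ^ (n₂ - n₁ - 1) ≠ 0 := pow_ne_zero _ (hz0 j)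
      have h2 : z j ^ (n₁+1) ≠ 0 := pow_ne_zero _ (hz0 j)
      have h3 : w j ^ (n₁+1) ≠ 0 := pow_ne_zero _ (hw0 j)
      have h4 : w j ^ (n₂ - n₁ - 1) ≠ 0 := pow_ne_zero _ (hw0 j)
      field_simp
  rw [hFP]
  have hπ : (2*(π:ℂ)*Complex.I) ≠ 0 := by
    simp [Real.pi_ne_zero, Complex.I_ne_zero, Complex.ofReal_ne_zero]
  have hNN : (-(2*(π:ℂ)*Complex.I))^n₂ * (-(2*(π:ℂ)*Complex.I))^n₂
      = (2*(π:ℂ)*Complex.I)^(2*n₂) := by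
    rw [← mul_pow, neg_mul_neg, ← sq, ← pow_mul]
  have hN0 : (-(2*(π:ℂ)*Complex.I))^n₂ ≠ 0 := pow_ne_zero _ (neg_ne_zero.2 hπ)
  have ha : (Nat.factorial n₁ : ℂ) ≠ 0 := Nat.cast_ne_zero.2 (Nat.factorial_ne_zero _)
  have hb : (Nat.factorial (n₂-n₁) : ℂ) ≠ 0 := Nat.cast_ne_zero.2 (Nat.factorial_ne_zero _)
  have hPPz : (∏ x : Fin n₂, z x ^ n₂) ≠ 0 :=
    Finset.prod_ne_zero_iff.2 fun x _ => pow_ne_zero _ (hz0 x)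
  have hPPw : (∏ x : Fin n₂, w x ^ n₂) ≠ 0 :=
    Finset.prod_ne_zero_iff.2 fun x _ => pow_ne_zero _ (hw0 x)
  rw [show (4*n₂) = 2*n₂ + 2*n₂ by ring, pow_add, ← hNN]
  field_simp [hN0, ha, hb, hPPz, hPPw]

lemma linesIntegral_mul_congr {n : ℕ} (d : Fin n → ℝ) (c₁ c₂ : ℂ)
    (f g : (Fin n → ℂ) → ℂ)
    (hfg : ∀ t : Fin n → ℝ,
      c₁ * f (fun j => ((d j : ℝ) : ℂ) + ((t j : ℝ) : ℂ) * Complex.I)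
        = c₂ * g (fun j => ((d j : ℝ) : ℂ) + ((t j : ℝ) : ℂ) * Complex.I)) :
    c₁ * linesIntegral d f = c₂ * linesIntegral d g := by
  unfold linesIntegral
  rw [← integral_const_mul, ← integral_const_mul]
  refine integral_congr_ae (Filter.Eventually.of_forall fun t => ?_)
  calc c₁ * (Complex.I ^ n * f fun j => ((d j : ℝ) : ℂ) + ((t j : ℝ) : ℂ) * Complex.I)
      = Complex.I ^ n * (c₁ * f fun j => ((d j : ℝ) : ℂ) + ((t j : ℝ) : ℂ) * Complex.I) := by
        ring
    _ = Complex.I ^ n * (c₂ * g fun j => ((d j : ℝ) : ℂ) + ((t j : ℝ) : ℂ) * Complex.I) := by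
        rw [hfg t]
    _ = c₂ * (Complex.I ^ n * g fun j => ((d j : ℝ) : ℂ) + ((t j : ℝ) : ℂ) * Complex.I) := by
        ring

/-- Lemma 3.1: the formula (3.1) for `Q(h)`.  Here `Q(h)` is defined by the `2n₂`-fold
line integral (2.27) (the left-hand side below), and the right-hand side is the
`4n₂`-fold integral in which the Vandermonde determinants have been replaced by contour
integrals over the circles `γ_{τ₁}`, `γ_{τ₂}`, valid when
`d₁ < d₃ < -max(τ₁,τ₂) < 0` and `d₄ < d₂ < -max(τ₁,τ₂) < 0`. -/
theorem Q_contour_representation (n₁ n₂ : ℕ) (hn₁ : 1 ≤ n₁) (hn₁₂ : n₁ < n₂)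
    (μ₁ Δμ ξ₁ Δξ : ℝ) (hμ₁ : 0 < μ₁) (hΔμ : 0 < Δμ) (h : ℂ)
    (d₁ d₂ d₃ d₄ τ₁ τ₂ : ℝ) (hτ₁ : 0 < τ₁) (hτ₂ : 0 < τ₂)
    (h₁₃ : d₁ < d₃) (h₃τ : d₃ < -max τ₁ τ₂) (h₄₂ : d₄ < d₂) (h₂τ : d₂ < -max τ₁ τ₂) :
    (-1 : ℂ) ^ (n₂ * (n₂ - 1) / 2) /
        ((2 * (π : ℂ) * Complex.I) ^ (2 * n₂) *
          (Nat.factorial n₁ : ℂ) * (Nat.factorial (n₂ - n₁) : ℂ)) *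
      linesIntegral (fun j : Fin n₂ => if (j : ℕ) < n₁ then d₁ else d₂) (fun z =>
        linesIntegral (fun j : Fin n₂ => if (j : ℕ) < n₁ then d₃ else d₄) (fun wv =>
          Matrix.det (Matrix.of fun i j : Fin n₂ => z j ^ (i : ℕ)) *
            Matrix.det (Matrix.of fun i j : Fin n₂ => wv j ^ (i : ℕ)) *
            ∏ j : Fin n₂,
              if (j : ℕ) < n₁ then
                Eexp μ₁ ξ₁ Δμ Δξ (z j) (wv j) /
                    (z j ^ (n₂ - n₁) * wv j ^ n₁) * ((z j - wv j)⁻¹ - h)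
              else
                Eexp μ₁ ξ₁ Δμ Δξ (z j) (wv j) /
                  (z j ^ (n₂ - n₁ - 1) * wv j ^ (n₁ + 1) * (wv j - z j)))) =
      1 / ((2 * (π : ℂ) * Complex.I) ^ (4 * n₂) *
          (Nat.factorial n₁ : ℂ) * (Nat.factorial (n₂ - n₁) : ℂ)) *
        linesIntegral (fun j : Fin n₂ => if (j : ℕ) < n₁ then d₁ else d₂) (fun z =>
          linesIntegral (fun j : Fin n₂ => if (j : ℕ) < n₁ then d₃ else d₄) (fun wv =>
            circlesIntegral (fun _ : Fin n₂ => τ₁) (fun ζ =>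
              circlesIntegral (fun _ : Fin n₂ => τ₂) (fun ω =>
                Matrix.det (Matrix.of fun i j : Fin n₂ =>
                    ζ j ^ (-(((i : ℕ) : ℤ) + 1))) *
                  Matrix.det (Matrix.of fun i j : Fin n₂ =>
                    ω j ^ (-((n₂ : ℤ) - ((i : ℕ) : ℤ)))) *
                  ∏ j : Fin n₂,
                    if (j : ℕ) < n₁ then
                      z j ^ n₁ * wv j ^ (n₂ - n₁) * Eexp μ₁ ξ₁ Δμ Δξ (z j) (wv j) /
                          (Eexp μ₁ ξ₁ Δμ Δξ (ζ j) (ω j) * (ζ j - z j) * (ω j - wv j)) *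
                        ((z j - wv j)⁻¹ - h)
                    else
                      z j ^ (n₁ + 1) * wv j ^ (n₂ - n₁ - 1) *
                          Eexp μ₁ ξ₁ Δμ Δξ (z j) (wv j) /
                        (Eexp μ₁ ξ₁ Δμ Δξ (ζ j) (ω j) * (wv j - z j) *
                          (ζ j - z j) * (ω j - wv j)))))) := by
  
  have hmax0 : 0 < max τ₁ τ₂ := lt_max_of_lt_left hτ₁
  have hd₁ : d₁ < -max τ₁ τ₂ := h₁₃.trans h₃τ
  have hd₂ : d₂ < -max τ₁ τ₂ := h₂τ
  have hd₃ : d₃ < -max τ₁ τ₂ := h₃τ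
  have hd₄ : d₄ < -max τ₁ τ₂ := h₄₂.trans h₂τ
  have habs : ∀ (dd tt : ℝ), dd < -max τ₁ τ₂ →
      max τ₁ τ₂ < ‖(dd:ℂ) + (tt:ℂ)*Complex.I‖ := by
    intro dd tt hdd
    have hre : ((dd:ℂ) + (tt:ℂ)*Complex.I).re = dd := by simp
    calc max τ₁ τ₂ < -dd := by linarith
      _ = |dd| := (abs_of_neg (by linarith)).symm
      _ = |(((dd:ℂ) + (tt:ℂ)*Complex.I)).re| := by rw [hre]
      _ ≤ ‖(dd:ℂ)+(tt:ℂ)*Complex.I‖ := Complex.abs_re_le_norm _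
  have hne0 : ∀ (dd tt : ℝ), dd < -max τ₁ τ₂ → ((dd:ℂ) + (tt:ℂ)*Complex.I) ≠ 0 := by
    intro dd tt hdd heq
    have h1 : ((dd:ℂ) + (tt:ℂ)*Complex.I).re = 0 := by rw [heq]; simp
    have h2 : ((dd:ℂ) + (tt:ℂ)*Complex.I).re = dd := by simp
    rw [h2] at h1
    linarith
  have hnewz : ∀ (a b ta tb : ℝ), a ≠ b →
      ((a:ℂ) + (ta:ℂ)*Complex.I) ≠ ((b:ℂ) + (tb:ℂ)*Complex.I) := by
    intro a b ta tb hab heq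
    apply hab
    have h1 := congrArg Complex.re heq
    simpa using h1
  apply linesIntegral_mul_congr
  intro t
  apply linesIntegral_mul_congr
  intro s
  refine core_identity n₁ n₂ hn₁₂ μ₁ Δμ ξ₁ Δξ h τ₁ τ₂ hτ₁ hτ₂ _ _
    (fun j => ?_) (fun j => ?_) (fun j => ?_) (fun j => ?_) (fun j => ?_)
  · by_cases hj : (j:ℕ) < n₁
    · simpa [hj] using hne0 d₁ (t j) hd₁
    · simpa [hj] using hne0 d₂ (t j) hd₂
  · by_cases hj : (j:ℕ) < n₁
    · simpa [hj] using hne0 d₃ (s j) hd₃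
    · simpa [hj] using hne0 d₄ (s j) hd₄
  · refine lt_of_le_of_lt (le_max_left τ₁ τ₂) ?_
    by_cases hj : (j:ℕ) < n₁
    · simpa [hj] using habs d₁ (t j) hd₁
    · simpa [hj] using habs d₂ (t j) hd₂
  · refine lt_of_le_of_lt (le_max_right τ₁ τ₂) ?_
    by_cases hj : (j:ℕ) < n₁
    · simpa [hj] using habs d₃ (s j) hd₃
    · simpa [hj] using habs d₄ (s j) hd₄
  · by_cases hj : (j:ℕ) < n₁
    · simpa [hj] using hnewz d₁ d₃ (t j) (s j) h₁₃.ne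
    · simpa [hj] using hnewz d₂ d₄ (t j) (s j) h₄₂.ne'
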